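/- The birational map φ(x_0, x_1, ..., x_{2k}) = (x_1, x_2, ..., x_{2k}, (x_1 x_{2k} + a(x_{k+1} + x_k))/x_0) is reversible: φ = σ ∘ φ^{-1} ∘ σ, where σ is the involution σ(x_0, x_1, ..., x_{2k}) = (x_{2k}, x_{2k-1}, ..., x_0). Equivalently, σ ∘ φ ∘ σ ∘ φ is the identity wherever defined. -/
import Mathlib


/-- The Heideman–Hogan birational map `φ` on `(2k+1)`-tuples (here with `k+1`
in place of `k`, so that `k+1` ranges over all positive integers):
`(x_0, …, x_{2k}) ↦ (x_1, …, x_{2k}, (x_1 x_{2k} + a(x_{k+1} + x_k))/x_0)`. -/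
def hhPhi {F : Type*} [Field F] (k : ℕ) (a : F)
    (v : Fin (2 * (k + 1) + 1) → F) : Fin (2 * (k + 1) + 1) → F :=
  fun i => if h : (i : ℕ) < 2 * (k + 1) then v ⟨i + 1, by omega⟩
    else (v ⟨1, by omega⟩ * v ⟨2 * (k + 1), by omega⟩
        + a * (v ⟨(k + 1) + 1, by omega⟩ + v ⟨k + 1, by omega⟩)) / v ⟨0, by omega⟩

/-- The reversal involution `σ(x_0, …, x_{2k}) = (x_{2k}, …, x_0)`. -/
def hhSigma {F : Type*} [Field F] (k : ℕ)
    (v : Fin (2 * (k + 1) + 1) → F) : Fin (2 * (k + 1) + 1) → F :=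
  fun i => v ⟨2 * (k + 1) - i, by omega⟩

theorem hhPhi_reversible {F : Type*} [Field F] (k : ℕ) (a : F)
    (v : Fin (2 * (k + 1) + 1) → F) (hv : ∀ i, v i ≠ 0)
    (hw : hhPhi k a v ⟨2 * (k + 1), by omega⟩ ≠ 0) :
    hhSigma k (hhPhi k a (hhSigma k (hhPhi k a v))) = v := by
  simp only [hhPhi] at hw
  rw [dif_neg (by omega)] at hw
  funext i
  rcases i with ⟨i, hi⟩
  simp only [hhSigma, hhPhi]
  rcases Nat.eq_zero_or_pos i with h0 | h0
  · subst h0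
    rw [dif_neg (show ¬ (2*(k+1) - 0 < 2*(k+1)) by omega),
        dif_neg (show ¬ (2*(k+1) - 0 < 2*(k+1)) by omega),
        dif_pos (show 2*(k+1) - 1 < 2*(k+1) by omega),
        dif_pos (show 2*(k+1) - 2*(k+1) < 2*(k+1) by omega),
        dif_pos (show 2*(k+1) - (k+1+1) < 2*(k+1) by omega),
        dif_pos (show 2*(k+1) - (k+1) < 2*(k+1) by omega)]
    simp only [show 2*(k+1) - 1 + 1 = 2*(k+1) by omega,
        show 2*(k+1) - 2*(k+1) + 1 = 1 by omega,
        show 2*(k+1) - (k+1+1) + 1 = k+1 by omega,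
        show 2*(k+1) - (k+1) + 1 = k+1+1 by omega]
    rw [div_eq_iff hw, mul_div_assoc', mul_div_cancel_left₀ _ (hv ⟨0, by omega⟩)]
    ring
  · rw [dif_pos (show 2*(k+1) - i < 2*(k+1) by omega),
        dif_pos (show 2*(k+1) - (2*(k+1) - i + 1) < 2*(k+1) by omega)]
    congr 1
    simp only [Fin.mk.injEq]
    omega
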